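/- For every N ≥ 1 and M ≥ 0 there exist λ* > 0 and C* < ∞ with the following property. Let H be a complex Hilbert space, 𝒜 = B(H), let Φ = (Φᵗ_α) be an anticommuting M-bounded family in 𝒜, and let c = (c^α_{α₁α₂α₃}) be real coefficients with |c^α_{α₁α₂α₃}| ≤ λ* for all indices α, α₁, α₂, α₃ ∈ {1,…,N}. Then every continuous solution Ψ : [0, ∞) → 𝒜^N of the cubic Grassmann integral equation with data (Φ, c) is uniformly bounded in time: sup_{t ≥ 0} max_{α} ‖Ψᵗ_α‖_𝒜 ≤ C*. -/

import Mathlib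

universe u

/-- A family `Φ : [0,∞) → 𝒜^N` is an anticommuting `M`-bounded family if its values pairwise
anticommute (so each squares to zero: Pauli exclusion principle), are bounded in norm by `M`
and are `1/2`-Hölder in time with constant `M`. -/
def AnticommFamily {A : Type*} [NormedRing A] {N : ℕ} (M : ℝ) (Φ : ℝ → Fin N → A) : Prop :=
  (∀ s t : ℝ, 0 ≤ s → 0 ≤ t → ∀ α β : Fin N, Φ t α * Φ s β = -(Φ s β * Φ t α)) ∧
  (∀ t : ℝ, 0 ≤ t → ∀ α : Fin N, ‖Φ t α‖ ≤ M) ∧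
  (∀ s t : ℝ, 0 ≤ s → 0 ≤ t → ∀ α : Fin N, ‖Φ t α - Φ s α‖ ≤ M * Real.sqrt |t - s|)

/-- `Ψ` is a (continuous) solution of the cubic Grassmann integral equation with data `(Φ, c)`:
`Ψᵗ_α = Φᵗ_α + ∫₀ᵗ e^{−(t−s)} Σ c^α_{α₁α₂α₃} Ψˢ_{α₁} Ψˢ_{α₂} Ψˢ_{α₃} ds` for `t ≥ 0`. -/
def CubicSolution {A : Type*} [NormedRing A] [NormedSpace ℝ A] [CompleteSpace A] {N : ℕ}
    (c : Fin N → Fin N → Fin N → Fin N → ℝ) (Φ : ℝ → Fin N → A) (Ψ : ℝ → Fin N → A) : Prop :=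
  (∀ α : Fin N, ContinuousOn (fun t => Ψ t α) (Set.Ici 0)) ∧
  ∀ t : ℝ, 0 ≤ t → ∀ α : Fin N,
    Ψ t α = Φ t α + ∫ s in (0 : ℝ)..t, Real.exp (-(t - s)) •
      ∑ α₁ : Fin N, ∑ α₂ : Fin N, ∑ α₃ : Fin N,
        c α α₁ α₂ α₃ • (Ψ s α₁ * Ψ s α₂ * Ψ s α₃)

set_option maxHeartbeats 1000000 in
/-- Uniform-in-time bound for small coupling: for every `N ≥ 1` and `M ≥ 0`
there are `λ* > 0` and `C* < ∞` such that for all coefficients bounded by `λ*`, every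
continuous solution of the cubic Grassmann integral equation with anticommuting `M`-bounded
datum `Φ` satisfies `sup_{t ≥ 0} maxₐ ‖Ψᵗ_α‖ ≤ C*`. -/
theorem stmt_14 (N : ℕ) (hN : 1 ≤ N) (M : ℝ) (hM : 0 ≤ M) :
    ∃ lamStar > (0 : ℝ), ∃ Cstar : ℝ,
      ∀ (H : Type u) [NormedAddCommGroup H] [InnerProductSpace ℂ H] [CompleteSpace H]
        (Φ : ℝ → Fin N → (H →L[ℂ] H)), AnticommFamily M Φ →
        ∀ c : Fin N → Fin N → Fin N → Fin N → ℝ,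
          (∀ α α₁ α₂ α₃, |c α α₁ α₂ α₃| ≤ lamStar) →
        ∀ Ψ : ℝ → Fin N → (H →L[ℂ] H), CubicSolution c Φ Ψ →
        ∀ t : ℝ, 0 ≤ t → ∀ α : Fin N, ‖Ψ t α‖ ≤ Cstar := by
  have hNpos : (0:ℝ) < (N:ℝ) := by exact_mod_cast Nat.lt_of_lt_of_le Nat.zero_lt_one hN
  set K : ℝ := M + 1 with hKdef
  have hKpos : 0 < K := by linarith
  set lam : ℝ := (2 * (N:ℝ)^3 * K^3)⁻¹ with hlamdef
  have hlampos : 0 < lam := by positivity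
  have hD : (N:ℝ)^3 * (lam * K^3) = 1/2 := by
    rw [hlamdef]; field_simp
  refine ⟨lam, hlampos, K, ?_⟩
  intro H _ _ _ Φ hΦ c hc Ψ hΨ
  obtain ⟨hcont, heq⟩ := hΨ
  obtain ⟨-, hΦbd, -⟩ := hΦ
  -- Key a priori estimate
  have key : ∀ t : ℝ, 0 ≤ t → (∀ s, 0 ≤ s → s ≤ t → ∀ β, ‖Ψ s β‖ ≤ K) →
      ∀ α : Fin N, ‖Ψ t α‖ ≤ M + 1/2 := by
    intro t ht hb α
    have hX : ∀ s, 0 ≤ s → s ≤ t →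
        ‖∑ α₁ : Fin N, ∑ α₂ : Fin N, ∑ α₃ : Fin N,
          c α α₁ α₂ α₃ • (Ψ s α₁ * Ψ s α₂ * Ψ s α₃)‖ ≤ 1/2 := by
      intro s hs hst
      have hterm : ∀ α₁ α₂ α₃ : Fin N,
          ‖c α α₁ α₂ α₃ • (Ψ s α₁ * Ψ s α₂ * Ψ s α₃)‖ ≤ lam * K^3 := by
        intro α₁ α₂ α₃
        have h3 : ‖Ψ s α₁ * Ψ s α₂ * Ψ s α₃‖ ≤ K^3 := by
          have e1 := hb s hs hst α₁
          have e2 := hb s hs hst α₂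
          have e3 := hb s hs hst α₃
          have p1 : ‖Ψ s α₁‖ * ‖Ψ s α₂‖ ≤ K * K :=
            mul_le_mul e1 e2 (norm_nonneg _) hKpos.le
          have p2 : ‖Ψ s α₁ * Ψ s α₂‖ * ‖Ψ s α₃‖ ≤ (K * K) * K :=
            mul_le_mul ((norm_mul_le _ _).trans p1) e3 (norm_nonneg _) (by positivity)
          calc ‖Ψ s α₁ * Ψ s α₂ * Ψ s α₃‖ ≤ ‖Ψ s α₁ * Ψ s α₂‖ * ‖Ψ s α₃‖ := norm_mul_le _ _
            _ ≤ (K * K) * K := p2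
            _ = K^3 := by ring
        rw [norm_smul, Real.norm_eq_abs]
        exact mul_le_mul (hc α α₁ α₂ α₃) h3 (norm_nonneg _) hlampos.le
      calc ‖∑ α₁ : Fin N, ∑ α₂ : Fin N, ∑ α₃ : Fin N,
            c α α₁ α₂ α₃ • (Ψ s α₁ * Ψ s α₂ * Ψ s α₃)‖
          ≤ ∑ α₁ : Fin N, ∑ α₂ : Fin N, ∑ α₃ : Fin N,
            ‖c α α₁ α₂ α₃ • (Ψ s α₁ * Ψ s α₂ * Ψ s α₃)‖ :=
            (norm_sum_le _ _).trans (Finset.sum_le_sum fun _ _ =>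
              (norm_sum_le _ _).trans (Finset.sum_le_sum fun _ _ => norm_sum_le _ _))
        _ ≤ ∑ _α₁ : Fin N, ∑ _α₂ : Fin N, ∑ _α₃ : Fin N, lam * K^3 :=
            Finset.sum_le_sum fun α₁ _ => Finset.sum_le_sum fun α₂ _ =>
              Finset.sum_le_sum fun α₃ _ => hterm α₁ α₂ α₃
        _ = (N:ℝ)^3 * (lam * K^3) := by
            simp [Finset.sum_const, Finset.card_univ]; ring
        _ = 1/2 := hD
    have hI : ‖∫ s in (0:ℝ)..t, Real.exp (-(t - s)) •
        ∑ α₁ : Fin N, ∑ α₂ : Fin N, ∑ α₃ : Fin N,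
          c α α₁ α₂ α₃ • (Ψ s α₁ * Ψ s α₂ * Ψ s α₃)‖ ≤ 1/2 := by
      have hg : IntervalIntegrable (fun s => Real.exp (-(t - s)) * (1/2))
          MeasureTheory.volume 0 t := by
        apply Continuous.intervalIntegrable
        have hc1 : Continuous fun s : ℝ => -(t - s) := (continuous_const.sub continuous_id).neg
        exact (Real.continuous_exp.comp hc1).mul continuous_const
      have hbd : ∀ᵐ s ∂MeasureTheory.volume.restrict (Set.uIoc (0:ℝ) t),
          ‖Real.exp (-(t - s)) • ∑ α₁ : Fin N, ∑ α₂ : Fin N, ∑ α₃ : Fin N,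
            c α α₁ α₂ α₃ • (Ψ s α₁ * Ψ s α₂ * Ψ s α₃)‖ ≤ Real.exp (-(t - s)) * (1/2) := by
        refine (MeasureTheory.ae_restrict_mem measurableSet_uIoc).mono ?_
        intro s hs
        rw [Set.uIoc_of_le ht] at hs
        rw [norm_smul, Real.norm_eq_abs, abs_of_pos (Real.exp_pos _)]
        exact mul_le_mul_of_nonneg_left (hX s hs.1.le hs.2) (Real.exp_pos _).le
      refine (intervalIntegral.norm_integral_le_abs_of_norm_le hbd hg).trans ?_
      have hcalc : (∫ s in (0:ℝ)..t, Real.exp (-(t - s)) * (1/2))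
          = (Real.exp t - 1) * (Real.exp (-t) * (1/2)) := by
        have hrw : ∀ s : ℝ, Real.exp (-(t - s)) * (1/2)
            = Real.exp s * (Real.exp (-t) * (1/2)) := by
          intro s
          rw [show -(t - s) = s + -t by ring, Real.exp_add]; ring
        simp_rw [hrw, intervalIntegral.integral_mul_const, integral_exp, Real.exp_zero]
      rw [hcalc]
      have h1 : Real.exp (-t) * Real.exp t = 1 := by rw [← Real.exp_add]; simp
      have h2 : (1:ℝ) ≤ Real.exp t := Real.one_le_exp ht
      have h3 : 0 < Real.exp (-t) := Real.exp_pos _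
      have h4 : 0 ≤ (Real.exp t - 1) * (Real.exp (-t) * (1/2)) :=
        mul_nonneg (by linarith) (by positivity)
      rw [abs_of_nonneg h4]
      nlinarith
    rw [heq t ht α]
    exact (norm_add_le _ _).trans (add_le_add (hΦbd t ht α) hI)
  -- The good set
  set G : Set ℝ := Set.Ici 0 ∩ (fun t => fun β : Fin N => ‖Ψ t β‖) ⁻¹'
      {v : Fin N → ℝ | ∀ β, v β ≤ K} with hGdef
  have hGmem : ∀ t : ℝ, t ∈ G ↔ (0 ≤ t ∧ ∀ β, ‖Ψ t β‖ ≤ K) := by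
    intro t; simp [hGdef, Set.mem_setOf_eq]
  have hGclosed : IsClosed G := by
    apply ContinuousOn.preimage_isClosed_of_isClosed
    · exact continuousOn_pi.2 fun β => (hcont β).norm
    · exact isClosed_Ici
    · have : {v : Fin N → ℝ | ∀ β, v β ≤ K} = ⋂ β, (fun v : Fin N → ℝ => v β) ⁻¹' Set.Iic K := by
        ext v; simp
      rw [this]
      exact isClosed_iInter fun β => isClosed_Iic.preimage (continuous_apply β)
  have h0G : (0:ℝ) ∈ G := by
    rw [hGmem]
    refine ⟨le_rfl, fun β => ?_⟩
    have := heq 0 le_rfl β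
    rw [intervalIntegral.integral_same, add_zero] at this
    rw [this]
    exact (hΦbd 0 le_rfl β).trans (by linarith)
  -- Main continuity argument
  by_contra hcon
  push_neg at hcon
  obtain ⟨t₁, ht₁, α₁, hgt₁⟩ := hcon
  set B : Set ℝ := {t : ℝ | 0 ≤ t ∧ t ∉ G} with hBdef
  have hBne : B.Nonempty := by
    refine ⟨t₁, ht₁, fun hmem => ?_⟩
    exact absurd ((hGmem t₁).1 hmem).2 (by push_neg; exact ⟨α₁, hgt₁⟩)
  have hBbd : BddBelow B := ⟨0, fun x hx => hx.1⟩
  set t₀ : ℝ := sInf B with ht₀def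
  have ht₀0 : 0 ≤ t₀ := le_csInf hBne fun x hx => hx.1
  have step1 : Set.Ico 0 t₀ ⊆ G := by
    intro s hs
    by_contra h
    have hsB : s ∈ B := ⟨hs.1, h⟩
    have := csInf_le hBbd hsB
    exact absurd hs.2 (not_lt.2 this)
  have step2 : t₀ ∈ G := by
    rcases eq_or_lt_of_le ht₀0 with h | h
    · rw [← h]; exact h0G
    · have hcl : t₀ ∈ closure (Set.Ico 0 t₀) := by
        rw [closure_Ico (ne_of_lt h)]
        exact ⟨ht₀0, le_rfl⟩
      exact hGclosed.closure_subset ((closure_mono step1) hcl)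
  have step3 : ∀ s, 0 ≤ s → s ≤ t₀ → ∀ β, ‖Ψ s β‖ ≤ K := by
    intro s hs hst β
    rcases lt_or_eq_of_le hst with h | h
    · exact ((hGmem s).1 (step1 ⟨hs, h⟩)).2 β
    · rw [h]; exact ((hGmem t₀).1 step2).2 β
  have strict : ∀ α : Fin N, ‖Ψ t₀ α‖ < K := fun α =>
    lt_of_le_of_lt (key t₀ ht₀0 step3 α) (by rw [hKdef]; linarith)
  have hev : ∀ᶠ s in nhdsWithin t₀ (Set.Ici 0), ∀ α : Fin N, ‖Ψ s α‖ < K := by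
    rw [Filter.eventually_all]
    intro α
    exact ((hcont α).norm t₀ ht₀0).eventually_lt_const (strict α)
  have hev' : ∀ᶠ s in nhdsWithin t₀ (Set.Ici t₀), ∀ α : Fin N, ‖Ψ s α‖ < K :=
    hev.filter_mono (nhdsWithin_mono t₀ (Set.Ici_subset_Ici.mpr ht₀0))
  obtain ⟨u, htu, hu⟩ := (nhdsGE_basis t₀).eventually_iff.mp hev'
  obtain ⟨b, hbB, hbu⟩ := (csInf_lt_iff hBbd hBne).mp (lt_of_eq_of_lt ht₀def.symm htu)
  have hbt₀ : t₀ ≤ b := csInf_le hBbd hbB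
  exact hbB.2 ((hGmem b).2 ⟨hbB.1, fun β => (hu (Set.mem_Ico.mpr ⟨hbt₀, hbu⟩) β).le⟩)
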